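/- Suppose β(s) = ∫B(s)ds + λ(s)N(s) for a smooth function λ, β is regular with Frenet frame {T̄, N̄, B̄}, the principal normal satisfies N̄ = εN with ε = ±1, and ⟨T(s), T̄(s)⟩ = cos θ(s) ≠ 0 for all s. Then λ is a nonzero constant, θ is constant, and (λ tan θ)κ(s) + λτ(s) = −1 for all s ∈ I (i.e. γ is a B-Bertrand curve). -/

import Mathlib

open scoped RealInnerProductSpace

noncomputable def cross3 (x y : EuclideanSpace ℝ (Fin 3)) : EuclideanSpace ℝ (Fin 3) :=
  WithLp.toLp 2 ![x 1 * y 2 - x 2 * y 1, x 2 * y 0 - x 0 * y 2, x 0 * y 1 - x 1 * y 0]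

private lemma const_on_Ioo {a b : ℝ} (f : ℝ → ℝ)
    (h : ∀ x ∈ Set.Ioo a b, HasDerivAt f 0 x) :
    ∀ s ∈ Set.Ioo a b, ∀ t ∈ Set.Ioo a b, f s = f t := by
  have key : ∀ s ∈ Set.Ioo a b, ∀ t ∈ Set.Ioo a b, s ≤ t → f t = f s := by
    intro s hs t ht hst
    have hsub : Set.Icc s t ⊆ Set.Ioo a b := fun x hx =>
      ⟨lt_of_lt_of_le hs.1 hx.1, lt_of_le_of_lt hx.2 ht.2⟩
    have := constant_of_has_deriv_right_zero (f := f) (a := s) (b := t)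
      (fun x hx => (h x (hsub hx)).continuousAt.continuousWithinAt)
      (fun x hx => (h x (hsub ⟨hx.1, hx.2.le⟩)).hasDerivWithinAt)
    exact this t (Set.right_mem_Icc.2 hst)
  intro s hs t ht
  rcases le_total s t with h' | h'
  · exact (key s hs t ht h').symm
  · exact key t ht s hs h'

/-- If β = ∫B ds + λN is regular with Frenet principal normal N̄ = ±N and
⟪T, T̄⟫ = cos θ ≠ 0, then λ is a nonzero constant, θ is constant, and
(λ tan θ)κ + λτ = -1 identically: γ is a B-Bertrand curve. -/
theorem stmt_3 (a b : ℝ) (γ T N B : ℝ → EuclideanSpace ℝ (Fin 3)) (κ τ : ℝ → ℝ)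
    (hγT : ∀ s ∈ Set.Ioo a b, HasDerivAt γ (T s) s)
    (hT1 : ∀ s ∈ Set.Ioo a b, ‖T s‖ = 1)
    (hN1 : ∀ s ∈ Set.Ioo a b, ‖N s‖ = 1)
    (hB1 : ∀ s ∈ Set.Ioo a b, ‖B s‖ = 1)
    (hTN : ∀ s ∈ Set.Ioo a b, ⟪T s, N s⟫ = 0)
    (hTB : ∀ s ∈ Set.Ioo a b, ⟪T s, B s⟫ = 0)
    (hNB : ∀ s ∈ Set.Ioo a b, ⟪N s, B s⟫ = 0)
    (horient : ∀ s ∈ Set.Ioo a b, B s = cross3 (T s) (N s))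
    (hκpos : ∀ s ∈ Set.Ioo a b, 0 < κ s)
    (hTder : ∀ s ∈ Set.Ioo a b, HasDerivAt T (κ s • N s) s)
    (hNder : ∀ s ∈ Set.Ioo a b, HasDerivAt N ((-κ s) • T s + τ s • B s) s)
    (hBder : ∀ s ∈ Set.Ioo a b, HasDerivAt B ((-τ s) • N s) s)
    (lam lamd σ κb : ℝ → ℝ)
    (Bint β Tb Nb : ℝ → EuclideanSpace ℝ (Fin 3))
    (hlam : ∀ s ∈ Set.Ioo a b, HasDerivAt lam (lamd s) s)
    (hBint : ∀ s ∈ Set.Ioo a b, HasDerivAt Bint (B s) s)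
    (hβ : ∀ s, β s = Bint s + lam s • N s)
    (hβreg : ∀ s ∈ Set.Ioo a b, HasDerivAt β (σ s • Tb s) s)
    (hσpos : ∀ s ∈ Set.Ioo a b, 0 < σ s)
    (hTb1 : ∀ s ∈ Set.Ioo a b, ‖Tb s‖ = 1)
    (hTbder : ∀ s ∈ Set.Ioo a b, HasDerivAt Tb ((σ s * κb s) • Nb s) s)
    (hκbpos : ∀ s ∈ Set.Ioo a b, 0 < κb s)
    (hNb1 : ∀ s ∈ Set.Ioo a b, ‖Nb s‖ = 1)
    (hNbN : ∀ s ∈ Set.Ioo a b, Nb s = N s ∨ Nb s = -N s)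
    (hangle : ∀ s ∈ Set.Ioo a b, ⟪T s, Tb s⟫ ≠ 0) :
    (∀ s ∈ Set.Ioo a b, ∀ t ∈ Set.Ioo a b, lam s = lam t) ∧
    (∀ s ∈ Set.Ioo a b, lam s ≠ 0) ∧
    ∃ θ : ℝ, ∀ s ∈ Set.Ioo a b,
      ⟪T s, Tb s⟫ = Real.cos θ ∧
      (lam s * Real.tan θ) * κ s + lam s * τ s = -1 := by
  -- ⟪Tb, Nb⟫ = 0
  have hTbNb : ∀ s ∈ Set.Ioo a b, ⟪Tb s, Nb s⟫ = 0 := by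
    intro s hs
    have hder := (hTbder s hs).inner ℝ (hTbder s hs)
    have hev : (fun u => ⟪Tb u, Tb u⟫) =ᶠ[nhds s] fun _ => (1 : ℝ) := by
      filter_upwards [isOpen_Ioo.mem_nhds hs] with u hu
      rw [real_inner_self_eq_norm_sq, hTb1 u hu]; norm_num
    have h0 : HasDerivAt (fun u => ⟪Tb u, Tb u⟫) 0 s :=
      (hasDerivAt_const s (1 : ℝ)).congr_of_eventuallyEq hev
    have huniq := h0.unique hder
    have hσκ : 0 < σ s * κb s := mul_pos (hσpos s hs) (hκbpos s hs)
    rw [real_inner_smul_right, real_inner_smul_left,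
      real_inner_comm (Tb s) (Nb s)] at huniq
    have ht : σ s * κb s * ⟪Tb s, Nb s⟫ = 0 := by linarith
    rcases mul_eq_zero.mp ht with h' | h'
    · exact absurd h' hσκ.ne'
    · exact h'
  -- ⟪Tb, N⟫ = 0, ⟪T, Nb⟫ = 0, ⟪B, Nb⟫ = 0
  have hTbN : ∀ s ∈ Set.Ioo a b, ⟪Tb s, N s⟫ = 0 := by
    intro s hs
    rcases hNbN s hs with h | h
    · rw [← h]; exact hTbNb s hs
    · have := hTbNb s hs; rw [h, inner_neg_right] at this; linarith
  have hTNb : ∀ s ∈ Set.Ioo a b, ⟪T s, Nb s⟫ = 0 := by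
    intro s hs
    rcases hNbN s hs with h | h
    · rw [h]; exact hTN s hs
    · rw [h, inner_neg_right, hTN s hs]; ring
  have hBNb : ∀ s ∈ Set.Ioo a b, ⟪B s, Nb s⟫ = 0 := by
    intro s hs
    rcases hNbN s hs with h | h
    · rw [h, real_inner_comm]; exact hNB s hs
    · rw [h, inner_neg_right, real_inner_comm, hNB s hs]; ring
  have hNTb : ∀ s ∈ Set.Ioo a b, ⟪N s, Tb s⟫ = 0 := fun s hs => by
    rw [real_inner_comm]; exact hTbN s hs
  -- key vector equation
  have E : ∀ s ∈ Set.Ioo a b, σ s • Tb s =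
      (-(lam s * κ s)) • T s + lamd s • N s + (1 + lam s * τ s) • B s := by
    intro s hs
    have h1 := (hBint s hs).add ((hlam s hs).smul (hNder s hs))
    have hβeq : β = Bint + lam • N := funext hβ
    rw [← hβeq] at h1
    have huniq := (hβreg s hs).unique h1
    rw [huniq]; module
  -- orthonormality facts as inner products
  have hTT : ∀ s ∈ Set.Ioo a b, ⟪T s, T s⟫ = 1 := fun s hs => by
    rw [real_inner_self_eq_norm_sq, hT1 s hs]; norm_num
  have hNN : ∀ s ∈ Set.Ioo a b, ⟪N s, N s⟫ = 1 := fun s hs => by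
    rw [real_inner_self_eq_norm_sq, hN1 s hs]; norm_num
  have hBB : ∀ s ∈ Set.Ioo a b, ⟪B s, B s⟫ = 1 := fun s hs => by
    rw [real_inner_self_eq_norm_sq, hB1 s hs]; norm_num
  have hNT : ∀ s ∈ Set.Ioo a b, ⟪N s, T s⟫ = 0 := fun s hs => by
    rw [real_inner_comm]; exact hTN s hs
  have hBT : ∀ s ∈ Set.Ioo a b, ⟪B s, T s⟫ = 0 := fun s hs => by
    rw [real_inner_comm]; exact hTB s hs
  have hBN : ∀ s ∈ Set.Ioo a b, ⟪B s, N s⟫ = 0 := fun s hs => by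
    rw [real_inner_comm]; exact hNB s hs
  -- lamd = 0
  have hlamd0 : ∀ s ∈ Set.Ioo a b, lamd s = 0 := by
    intro s hs
    have h := congrArg (fun v => ⟪N s, v⟫) (E s hs)
    simp only [inner_add_right, real_inner_smul_right] at h
    rw [hNTb s hs, hNN s hs, hNT s hs, hNB s hs] at h
    linarith [h]
  -- σ ⟪T,Tb⟫ = -(λκ), σ ⟪B,Tb⟫ = 1 + λτ
  have hcEq : ∀ s ∈ Set.Ioo a b, σ s * ⟪T s, Tb s⟫ = -(lam s * κ s) := by
    intro s hs
    have h := congrArg (fun v => ⟪T s, v⟫) (E s hs)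
    simp only [inner_add_right, real_inner_smul_right] at h
    rw [hTT s hs, hTN s hs, hTB s hs] at h
    linarith [h]
  have hdEq : ∀ s ∈ Set.Ioo a b, σ s * ⟪B s, Tb s⟫ = 1 + lam s * τ s := by
    intro s hs
    have h := congrArg (fun v => ⟪B s, v⟫) (E s hs)
    simp only [inner_add_right, real_inner_smul_right] at h
    rw [hBT s hs, hBN s hs, hBB s hs] at h
    linarith [h]
  -- σ² = (λκ)² + (1+λτ)²
  have hσ2 : ∀ s ∈ Set.Ioo a b, σ s ^ 2 = (lam s * κ s) ^ 2 + (1 + lam s * τ s) ^ 2 := by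
    intro s hs
    have hTbTb : ⟪Tb s, Tb s⟫ = 1 := by
      rw [real_inner_self_eq_norm_sq, hTb1 s hs]; norm_num
    have h := congrArg (fun v => ⟪v, v⟫) (E s hs)
    simp only [inner_add_right, inner_add_left, real_inner_smul_right,
      real_inner_smul_left] at h
    rw [hTbTb, hTT s hs, hNN s hs, hBB s hs, hTN s hs, hNT s hs, hTB s hs,
      hBT s hs, hNB s hs, hBN s hs, hlamd0 s hs] at h
    nlinarith [h]
  -- c² + d² = 1
  have hcd : ∀ s ∈ Set.Ioo a b, ⟪T s, Tb s⟫ ^ 2 + ⟪B s, Tb s⟫ ^ 2 = 1 := by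
    intro s hs
    have hσ := hσpos s hs
    have h1 := hcEq s hs
    have h2 := hdEq s hs
    have h3 := hσ2 s hs
    have key : σ s ^ 2 * (⟪T s, Tb s⟫ ^ 2 + ⟪B s, Tb s⟫ ^ 2) = σ s ^ 2 * 1 := by
      linear_combination (σ s * ⟪T s, Tb s⟫ - lam s * κ s) * h1 +
        (σ s * ⟪B s, Tb s⟫ + (1 + lam s * τ s)) * h2 - h3
    exact mul_left_cancel₀ (by positivity) key
  -- derivatives of c and d vanish
  have hc0 : ∀ s ∈ Set.Ioo a b, HasDerivAt (fun u => ⟪T u, Tb u⟫) 0 s := by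
    intro s hs
    have h := (hTder s hs).inner ℝ (hTbder s hs)
    refine h.congr_deriv ?_
    rw [real_inner_smul_right, real_inner_smul_left, hTNb s hs, hNTb s hs]
    ring
  have hd0 : ∀ s ∈ Set.Ioo a b, HasDerivAt (fun u => ⟪B u, Tb u⟫) 0 s := by
    intro s hs
    have h := (hBder s hs).inner ℝ (hTbder s hs)
    refine h.congr_deriv ?_
    rw [real_inner_smul_right, real_inner_smul_left, hBNb s hs, hNTb s hs]
    ring
  -- constancy
  have hlamconst : ∀ s ∈ Set.Ioo a b, ∀ t ∈ Set.Ioo a b, lam s = lam t :=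
    const_on_Ioo lam (fun x hx => hlamd0 x hx ▸ hlam x hx)
  have hcconst := const_on_Ioo (fun u => ⟪T u, Tb u⟫) hc0
  have hdconst := const_on_Ioo (fun u => ⟪B u, Tb u⟫) hd0
  -- lam nonzero
  have hlamne : ∀ s ∈ Set.Ioo a b, lam s ≠ 0 := by
    intro s hs hl
    have h := hcEq s hs
    rw [hl] at h
    have := hangle s hs
    have hσ := (hσpos s hs).ne'
    simp only [zero_mul, neg_zero] at h
    exact this (by
      rcases mul_eq_zero.mp h with h' | h'
      · exact absurd h' hσ
      · exact h')
  refine ⟨hlamconst, hlamne, ?_⟩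
  rcases Set.eq_empty_or_nonempty (Set.Ioo a b) with he | ⟨s₀, hs₀⟩
  · exact ⟨0, fun s hs => absurd hs (he ▸ Set.notMem_empty s)⟩
  set c₀ : ℝ := ⟪T s₀, Tb s₀⟫ with hc₀def
  set d₀ : ℝ := ⟪B s₀, Tb s₀⟫ with hd₀def
  have hunit : c₀ ^ 2 + d₀ ^ 2 = 1 := hcd s₀ hs₀
  have hc₀ne : c₀ ≠ 0 := hangle s₀ hs₀
  have hle1 : -1 ≤ c₀ := by nlinarith [sq_nonneg d₀]
  have hle2 : c₀ ≤ 1 := by nlinarith [sq_nonneg d₀]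
  set θ : ℝ := if 0 ≤ d₀ then Real.arccos c₀ else -Real.arccos c₀ with hθdef
  have hcos : Real.cos θ = c₀ := by
    rw [hθdef]; split <;> simp [Real.cos_arccos hle1 hle2]
  have hsin : Real.sin θ = d₀ := by
    rw [hθdef]
    have hsqrt : Real.sqrt (1 - c₀ ^ 2) = |d₀| := by
      rw [show (1 : ℝ) - c₀ ^ 2 = d₀ ^ 2 by linarith, Real.sqrt_sq_eq_abs]
    split
    · next h => rw [Real.sin_arccos, hsqrt, abs_of_nonneg h]
    · next h =>
        rw [Real.sin_neg, Real.sin_arccos, hsqrt, abs_of_neg (lt_of_not_ge h)]; ring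
  refine ⟨θ, fun s hs => ?_⟩
  have hcs : ⟪T s, Tb s⟫ = c₀ := hcconst s hs s₀ hs₀
  have hds : ⟪B s, Tb s⟫ = d₀ := hdconst s hs s₀ hs₀
  refine ⟨by rw [hcs, hcos], ?_⟩
  have h1 : σ s * c₀ = -(lam s * κ s) := by rw [← hcs]; exact hcEq s hs
  have h2 : σ s * d₀ = 1 + lam s * τ s := by rw [← hds]; exact hdEq s hs
  rw [Real.tan_eq_sin_div_cos, hsin, hcos]
  field_simp
  linear_combination d₀ * h1 - c₀ * h2
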